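/- Let C be a pointed category with binary products in which the 'centralic' law holds: for all f : A × B → C' and generalized elements x, y : U → A, z : U → B, if f ∘ (x, 0) = f ∘ (y, 0) then f ∘ (x, z) = f ∘ (y, z). Then C has normal projections: for all f : A × B → C', a : U → A, b : U → B, f ∘ (a, 0) = 0 implies f ∘ (a, b) = f ∘ (0, b). -/

import Mathlib

open CategoryTheory Limits

/-- A pointed category with binary products satisfying the centralic law
(`f ∘ (x,0) = f ∘ (y,0)` implies `f ∘ (x,z) = f ∘ (y,z)`) has normal projections
(in the elementwise form: `f ∘ (a,0) = 0` implies `f ∘ (a,b) = f ∘ (0,b)`). -/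
theorem stmt12 {C : Type*} [Category C] [HasZeroObject C] [HasZeroMorphisms C]
    [HasBinaryProducts C]
    (H : ∀ ⦃A B C' U : C⦄ (f : A ⨯ B ⟶ C') (x y : U ⟶ A) (z : U ⟶ B),
      prod.lift x (0 : U ⟶ B) ≫ f = prod.lift y (0 : U ⟶ B) ≫ f →
        prod.lift x z ≫ f = prod.lift y z ≫ f) :
    ∀ ⦃A B C' U : C⦄ (f : A ⨯ B ⟶ C') (a : U ⟶ A) (b : U ⟶ B),
      prod.lift a (0 : U ⟶ B) ≫ f = 0 →
        prod.lift a b ≫ f = prod.lift (0 : U ⟶ A) b ≫ f := by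
  intro A B C' U f a b h
  apply H
  have hz : prod.lift (0 : U ⟶ A) (0 : U ⟶ B) = 0 := by
    apply Limits.prod.hom_ext <;> simp only [prod.lift_fst, prod.lift_snd, zero_comp]
  rw [h, hz, zero_comp]
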